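/- Let g : ℝ → ℝ be a strictly increasing continuous map with g(x+1) = g(x)+1 for all x, and suppose its rotation number ρ(g) satisfies: either ρ(g) is irrational, or ρ(g) = P/Q in lowest terms. Then for every x ∈ ℝ and every pair of integers p and q with |q| < Q (with Q = ∞ when ρ(g) is irrational), one has (g^q(x) − x − p)·(q·ρ(g) − p) > 0. -/

import Mathlib

open Filter

/-- Lemma 1.1 of Świątek: Let `g` be a strictly increasing continuous lift of a
degree-1 circle homeomorphism, with iterates `G : ℤ → ℝ → ℝ` (`G 0 = id`, `G (n+1) = g ∘ G n`)
and rotation number `ρ` (the limit of `(gⁿ(x) − x)/n`).  If `ρ` is irrational set `Q = ∞`,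
and if `ρ = P/Q` in lowest terms take that `Q`.  Then for every `x` and every pair of
integers `p`, `q` with `q ≠ 0` and `|q| < Q`, one has `(G q x − x − p)(qρ − p) > 0`. -/
theorem stmt_7 (g : ℝ → ℝ) (hmono : StrictMono g) (hcont : Continuous g)
    (hper : ∀ x, g (x + 1) = g x + 1)
    (G : ℤ → ℝ → ℝ) (hG0 : ∀ x, G 0 x = x) (hGsucc : ∀ (n : ℤ) (x : ℝ), G (n + 1) x = g (G n x))
    (ρ : ℝ) (hρ : ∀ x, Tendsto (fun n : ℕ => (G (n : ℤ) x - x) / (n : ℝ)) atTop (nhds ρ))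
    (Q : ℕ∞)
    (hQ : (Q = ⊤ ∧ Irrational ρ) ∨
      (∃ P : ℤ, ∃ q0 : ℕ, 0 < q0 ∧ Q = (q0 : ℕ∞) ∧ ρ = (P : ℝ) / (q0 : ℝ) ∧
        Nat.Coprime P.natAbs q0)) :
    ∀ (x : ℝ) (p q : ℤ), q ≠ 0 → (q.natAbs : ℕ∞) < Q →
      (G q x - x - (p : ℝ)) * ((q : ℝ) * ρ - (p : ℝ)) > 0 := by
  -- The circle lift
  set f : CircleDeg1Lift := ⟨⟨g, hmono.monotone⟩, hper⟩ with hf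
  have hfg : ∀ x, f x = g x := fun _ => rfl
  -- `G` on naturals is iteration of `g`
  have hGn : ∀ (n : ℕ) (x : ℝ), G (n : ℤ) x = (f ^ n) x := by
    intro n
    induction n with
    | zero => intro x; simpa using hG0 x
    | succ n ih =>
      intro x
      have : ((n + 1 : ℕ) : ℤ) = (n : ℤ) + 1 := by push_cast; ring
      rw [this, hGsucc, ih, CircleDeg1Lift.coe_pow, CircleDeg1Lift.coe_pow,
        Function.iterate_succ_apply']
      rfl
  -- translation number of `f` is `ρ`
  have hτ : CircleDeg1Lift.translationNumber f = ρ := by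
    apply f.translationNumber_eq_of_tendsto₀
    have := hρ 0
    simp only [sub_zero] at this
    refine this.congr fun n => ?_
    rw [hGn n 0, CircleDeg1Lift.coe_pow]
  -- `G n` commutes with `g`
  have hcomm : ∀ (n : ℤ) (x : ℝ), G n (g x) = g (G n x) := by
    intro n
    induction n using Int.induction_on with
    | zero => intro x; rw [hG0, hG0]
    | succ n ih => intro x; rw [hGsucc, hGsucc, ih]
    | pred n ih =>
      intro x
      have h1 := hGsucc (-(n : ℤ) - 1) (g x)
      have h2 := hGsucc (-(n : ℤ) - 1) x
      rw [sub_add_cancel] at h1 h2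
      apply hmono.injective
      rw [← h1, ih, h2]
  -- `G (-n)` inverts `G n`
  have hinv : ∀ (n : ℤ) (x : ℝ), G (-n) (G n x) = x := by
    intro n
    induction n using Int.induction_on with
    | zero => intro x; rw [neg_zero, hG0, hG0]
    | succ n ih =>
      intro x
      rw [hGsucc, hcomm]
      have h2 := hGsucc (-(n : ℤ) - 1) (G n x)
      rw [sub_add_cancel] at h2
      have : (-((n : ℤ) + 1)) = -(n : ℤ) - 1 := by ring
      rw [this, ← h2] at *
      apply hmono.injective
      rw [h2, ih]
    | pred n ih =>
      intro x
      have h1 := hGsucc (-(n : ℤ) - 1) x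
      rw [sub_add_cancel] at h1
      have e : -(-(n : ℤ) - 1) = (n : ℤ) + 1 := by ring
      simp only [neg_neg] at ih
      rw [e, hGsucc, ← hcomm, ← h1, ih]
  -- main claim for positive q
  have key : ∀ q : ℤ, 0 < q → (q.natAbs : ℕ∞) < Q → ∀ (x : ℝ) (p : ℤ),
      (G q x - x - (p : ℝ)) * ((q : ℝ) * ρ - (p : ℝ)) > 0 := by
    intro q hq hqQ x p
    obtain ⟨n, rfl⟩ : ∃ n : ℕ, q = (n : ℤ) := ⟨q.toNat, (Int.toNat_of_nonneg hq.le).symm⟩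
    have hτn : CircleDeg1Lift.translationNumber (f ^ n) = (n : ℝ) * ρ := by
      rw [CircleDeg1Lift.translationNumber_pow, hτ]
    rcases lt_trichotomy ((n : ℝ) * ρ) (p : ℝ) with hlt | heq | hgt
    · have := (f ^ n).map_lt_of_translationNumber_lt_int (n := p) (by rwa [hτn]) x
      rw [← hGn] at this
      push_cast at hlt ⊢
      nlinarith
    · exfalso
      have hn0 : (n : ℝ) ≠ 0 := by
        have : (0 : ℤ) < n := hq
        exact_mod_cast (by exact_mod_cast this : (0:ℝ) < n).ne'
      rcases hQ with ⟨_, hirr⟩ | ⟨P, q0, hq0, hQeq, hρeq, hcop⟩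
      · have : ρ = ((p : ℚ) / (n : ℚ) : ℚ) := by
          field_simp at heq ⊢
          push_cast
          rw [eq_div_iff hn0]
          linarith [heq]
        exact hirr ⟨_, this.symm⟩
      · -- n * P / q0 = p, so q0 ∣ n, contradicting n < q0
        have hq0R : ((q0 : ℝ)) ≠ 0 := by positivity
        have hZ : (n : ℤ) * P = p * q0 := by
          have : (n : ℝ) * ((P : ℝ) / (q0 : ℝ)) = (p : ℝ) := by rw [← hρeq]; exact heq
          have h2 : ((n : ℤ) * P : ℝ) = ((p * q0 : ℤ) : ℝ) := by
            push_cast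
            field_simp at this
            linarith [this]
          exact_mod_cast h2
        have hdvd : (q0 : ℤ) ∣ (n : ℤ) * P := ⟨p, by linarith [hZ]⟩
        have hcop' : IsCoprime (q0 : ℤ) P := by
          rw [Int.isCoprime_iff_gcd_eq_one, Int.gcd]
          simpa [Nat.coprime_comm] using hcop
        have : (q0 : ℤ) ∣ (n : ℤ) := hcop'.dvd_of_dvd_mul_right hdvd
        have hle : q0 ≤ n := by
          have hn0' : 0 < n := by exact_mod_cast hq
          exact Nat.le_of_dvd hn0' (by exact_mod_cast this)
        have hlt' : n < q0 := by
          rw [hQeq] at hqQ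
          simpa using (by exact_mod_cast hqQ : ((n : ℤ).natAbs : ℕ∞) < (q0 : ℕ∞))
        omega
    · have := (f ^ n).lt_map_of_int_lt_translationNumber (n := p) (by rwa [hτn]) x
      rw [← hGn] at this
      push_cast at hgt ⊢
      nlinarith
  intro x p q hq0 hqQ
  rcases lt_or_gt_of_ne hq0 with hneg | hpos
  · -- reduce to positive case via `y = G q x`
    have hx : G (-q) (G q x) = x := hinv q x
    have h := key (-q) (by omega) (by simpa using hqQ) (G q x) (-p)
    rw [hx] at h
    push_cast at h ⊢
    nlinarith
  · exact key q hpos hqQ x p
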